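/- If ρ is a rank function of a sum-matroid on P(K^n) (i.e., ρ satisfies (R1), (R2), (R3)), then the dual function ρ*(L) = ρ(L⊥) + Rk(L) − ρ(K^n) also satisfies (R1), (R2), (R3), i.e., ρ* is a rank function of a sum-matroid on P(K^n). -/

import Mathlib

open Module

/-! Setup for sum-rank metric codes and sum-matroids.

We fix `ℓ` finite fields `K i` with a common extension `F` (given by algebra
structures), and block lengths `nv i`.  The ambient space `F^n` (with
`n = ∑ i, nv i`) is modelled as the dependent product of the blocks `F^{nv i}`,
and an element of the product lattice `P(K^n)` is a tuple of `K i`-subspaces of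
`K i ^ (nv i)`. -/

/-- The ambient space `F^n`, split into `ℓ` blocks of sizes `nv i`. -/
abbrev SRAmb (ℓ : ℕ) (nv : Fin ℓ → ℕ) (F : Type) : Type :=
  (i : Fin ℓ) → Fin (nv i) → F

/-- The product lattice `P(K^n)`: tuples `L` where `L i` is a `K i`-subspace of
`K i ^ (nv i)`. -/
abbrev SRLat (ℓ : ℕ) (nv : Fin ℓ → ℕ) (K : Fin ℓ → Type) [∀ i, Field (K i)] : Type :=
  (i : Fin ℓ) → Submodule (K i) (Fin (nv i) → K i)

variable {ℓ : ℕ} {nv : Fin ℓ → ℕ} {F : Type} [Field F]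
  {K : Fin ℓ → Type} [∀ i, Field (K i)] [∀ i, Algebra (K i) F]

/-- `Rk(L) = ∑ i, dim_{K i} (L i)`. -/
noncomputable def SRrk (L : SRLat ℓ nv K) : ℕ := ∑ i, finrank (K i) (L i)

/-- Orthogonal complement of a subspace of `k^m` with respect to the standard
dot product. -/
def SRorth {k : Type} [Field k] {m : ℕ} (W : Submodule k (Fin m → k)) :
    Submodule k (Fin m → k) where
  carrier := {v | ∀ w ∈ W, ∑ t, v t * w t = 0}
  zero_mem' := by intro w hw; simp
  add_mem' := by
    intro a b ha hb w hw
    have h : ∑ t, (a + b) t * w t = (∑ t, a t * w t) + ∑ t, b t * w t := by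
      simp [add_mul, Finset.sum_add_distrib]
    rw [h, ha w hw, hb w hw, add_zero]
  smul_mem' := by
    intro c a ha w hw
    have h : ∑ t, (c • a) t * w t = c * ∑ t, a t * w t := by
      simp [Finset.mul_sum, mul_assoc]
    rw [h, ha w hw, mul_zero]

/-- Componentwise orthogonal complement `L^⊥` in the lattice `P(K^n)`. -/
def SRlatPerp (L : SRLat ℓ nv K) : SRLat ℓ nv K := fun i => SRorth (L i)

/-- The `i`-th component of the sum-rank support of `c ∈ F^n`: the `K i`-row
space of the coordinate matrix of the `i`-th block of `c` (described
basis-freely as the span of the images of the block of `c` under all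
`K i`-linear functionals `F → K i`). -/
def SRsupp (c : SRAmb ℓ nv F) (i : Fin ℓ) : Submodule (K i) (Fin (nv i) → K i) :=
  Submodule.span (K i) {v | ∃ f : F →ₗ[K i] K i, v = fun t => f (c i t)}

/-- The sum-rank weight `srank(c) = Rk(supp(c))`. -/
noncomputable def SRwt (c : SRAmb ℓ nv F) : ℕ :=
  ∑ i, finrank (K i) (SRsupp (K := K) c i)

/-- The sum-rank support space `V_L = {c ∈ F^n : supp(c) ⊆ L}`. -/
def SRVL (L : SRLat ℓ nv K) : Submodule F (SRAmb ℓ nv F) where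
  carrier := {c | ∀ i, SRsupp (K := K) c i ≤ L i}
  zero_mem' := by
    intro i
    apply Submodule.span_le.mpr
    rintro v ⟨f, rfl⟩
    have h : (fun t => f ((0 : SRAmb ℓ nv F) i t)) = (0 : Fin (nv i) → K i) := by
      funext t; simp
    rw [h]
    exact (L i).zero_mem
  add_mem' := by
    intro a b ha hb i
    apply Submodule.span_le.mpr
    rintro v ⟨f, rfl⟩
    have h : (fun t => f ((a + b) i t)) =
        (fun t => f (a i t)) + fun t => f (b i t) := by
      funext t; simp
    rw [h]
    exact (L i).add_mem (ha i (Submodule.subset_span ⟨f, rfl⟩))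
      (hb i (Submodule.subset_span ⟨f, rfl⟩))
  smul_mem' := by
    intro x a ha i
    apply Submodule.span_le.mpr
    rintro v ⟨f, rfl⟩
    have h : (fun t => f ((x • a) i t)) =
        fun t => (f.comp (LinearMap.mulLeft (K i) x)) (a i t) := by
      funext t; simp [smul_eq_mul]
    rw [h]
    exact ha i (Submodule.subset_span ⟨_, rfl⟩)

/-- The dual code `C^⊥` with respect to the standard bilinear form on `F^n`. -/
def SRdual (C : Submodule F (SRAmb ℓ nv F)) : Submodule F (SRAmb ℓ nv F) where
  carrier := {x | ∀ c ∈ C, ∑ i, ∑ t, x i t * c i t = 0}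
  zero_mem' := by intro c hc; simp
  add_mem' := by
    intro a b ha hb c hc
    have h : ∑ i, ∑ t, (a + b) i t * c i t =
        (∑ i, ∑ t, a i t * c i t) + ∑ i, ∑ t, b i t * c i t := by
      simp [add_mul, Finset.sum_add_distrib]
    rw [h, ha c hc, hb c hc, add_zero]
  smul_mem' := by
    intro x a ha c hc
    have h : ∑ i, ∑ t, (x • a) i t * c i t = x * ∑ i, ∑ t, a i t * c i t := by
      simp [Finset.mul_sum, mul_assoc]
    rw [h, ha c hc, mul_zero]

/-- `C(L) = {c ∈ C^⊥ : supp(c) ⊆ L^⊥} = C^⊥ ∩ V_{L^⊥}`. -/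
def SRCL (C : Submodule F (SRAmb ℓ nv F)) (L : SRLat ℓ nv K) :
    Submodule F (SRAmb ℓ nv F) :=
  SRdual C ⊓ SRVL (SRlatPerp L)

/-- The projection `Π_L : F^n → F^{Rk L}`, `x ↦ x Aᵀ`, where
`A = diag(A_1, …, A_ℓ)` and `A_i` is the matrix whose rows are the chosen basis
of `L i` over `K i`.  The target `F^{Rk L}` is indexed blockwise. -/
noncomputable def SRpi (L : SRLat ℓ nv K) :
    SRAmb ℓ nv F →ₗ[F] ((i : Fin ℓ) → Fin (finrank (K i) (L i)) → F) where
  toFun x := fun i j =>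
    ∑ t, x i t * algebraMap (K i) F ((Module.finBasis (K i) (L i) j).val t)
  map_add' x y := by
    funext i j
    simp [add_mul, Finset.sum_add_distrib]
  map_smul' a x := by
    funext i j
    simp [Finset.mul_sum, mul_assoc]

/-- The rank function `ρ_C(L) = dim_F Π_L(C^⊥)` of the sum-matroid associated
to the code `C`. -/
noncomputable def SRrho (C : Submodule F (SRAmb ℓ nv F)) (L : SRLat ℓ nv K) : ℕ :=
  finrank F (Submodule.map (SRpi (F := F) L) (SRdual C))

/-- Minimum sum-rank distance of a code. -/
noncomputable def SRminDist (K : Fin ℓ → Type) [∀ i, Field (K i)]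
    [∀ i, Algebra (K i) F] (C : Submodule F (SRAmb ℓ nv F)) : ℕ :=
  sInf {w | ∃ c ∈ C, c ≠ 0 ∧ SRwt (K := K) c = w}

/-- The `r`-th generalized sum-rank weight
`d_{SR,r}(C) = min{Rk L : dim_F (C ∩ V_L) ≥ r}`. -/
noncomputable def SRdgw (K : Fin ℓ → Type) [∀ i, Field (K i)]
    [∀ i, Algebra (K i) F] (C : Submodule F (SRAmb ℓ nv F)) (r : ℕ) : ℕ :=
  sInf {w | ∃ L : SRLat ℓ nv K, r ≤ finrank F ↥(C ⊓ SRVL L) ∧ SRrk L = w}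

/-- The sum-matroid axioms (R1), (R2), (R3) for a function `ρ : P(K^n) → ℕ`. -/
def IsSumMatroid (ρ : SRLat ℓ nv K → ℕ) : Prop :=
  (∀ L, ρ L ≤ SRrk L) ∧
  (∀ L L' : SRLat ℓ nv K, L ≤ L' → ρ L ≤ ρ L') ∧
  (∀ L L' : SRLat ℓ nv K, ρ (L ⊔ L') + ρ (L ⊓ L') ≤ ρ L + ρ L')

/-- The dual rank function `ρ*(L) = ρ(L^⊥) + Rk L − ρ(K^n)`. -/
noncomputable def SRdualRk (ρ : SRLat ℓ nv K → ℕ) (L : SRLat ℓ nv K) : ℕ :=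
  ρ (SRlatPerp L) + SRrk L - ρ ⊤

/-- The nullity function `η(L) = Rk L − ρ(L)`. -/
noncomputable def SReta (ρ : SRLat ℓ nv K → ℕ) (L : SRLat ℓ nv K) : ℕ :=
  SRrk L - ρ L

/-- The `i`-th generalized weight of a sum-matroid,
`d_i(M) = min{Rk L : η(L) = i}`. -/
noncomputable def SRgw (ρ : SRLat ℓ nv K → ℕ) (i : ℕ) : ℕ :=
  sInf {w | ∃ L : SRLat ℓ nv K, SReta ρ L = i ∧ SRrk L = w}


section Perp
variable {k : Type} [Field k] {m : ℕ}

noncomputable def SRbil (k : Type) [Field k] (m : ℕ) : LinearMap.BilinForm k (Fin m → k) :=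
  LinearMap.mk₂ k (fun v w => ∑ t, v t * w t)
    (fun a b c => by simp [add_mul, Finset.sum_add_distrib])
    (fun a b c => by simp [Finset.mul_sum, mul_assoc])
    (fun a b c => by simp [mul_add, Finset.sum_add_distrib])
    (fun a b c => by simp [Finset.mul_sum]; congr 1; ext t; ring)

lemma SRbil_apply (v w : Fin m → k) : SRbil k m v w = ∑ t, v t * w t := rfl

lemma SRbil_isRefl : (SRbil k m).IsRefl := by
  intro v w h
  rw [SRbil_apply] at h ⊢
  rw [← h]; congr 1; ext t; ring

lemma SRbil_nondeg : (SRbil k m).Nondegenerate := by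
  constructor <;> intro v h <;> funext t <;> have := h (Pi.single t 1) <;>
  rw [SRbil_apply] at this <;>
  simpa [Pi.single_apply, Finset.sum_ite_eq'] using this

lemma SRorth_eq_orthogonal (W : Submodule k (Fin m → k)) :
    SRorth W = (SRbil k m).orthogonal W := by
  ext v
  constructor
  · intro hv w hw
    show ∑ t, w t * v t = 0
    rw [← hv w hw]
    exact Finset.sum_congr rfl (fun t _ => mul_comm _ _)
  · intro hv w hw
    have h : ∑ t, w t * v t = 0 := hv w hw
    rw [← h]
    exact Finset.sum_congr rfl (fun t _ => mul_comm _ _)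

lemma SRorth_finrank (W : Submodule k (Fin m → k)) :
    finrank k (SRorth W) = m - finrank k W := by
  classical
  rw [SRorth_eq_orthogonal,
    LinearMap.BilinForm.finrank_orthogonal SRbil_nondeg, finrank_fin_fun]

lemma SRorth_orth (W : Submodule k (Fin m → k)) : SRorth (SRorth W) = W := by
  rw [SRorth_eq_orthogonal, SRorth_eq_orthogonal]
  exact LinearMap.BilinForm.orthogonal_orthogonal SRbil_nondeg SRbil_isRefl W

lemma SRorth_antitone {W W' : Submodule k (Fin m → k)} (h : W ≤ W') :
    SRorth W' ≤ SRorth W := fun v hv w hw => hv w (h hw)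

lemma SRorth_sup (W W' : Submodule k (Fin m → k)) :
    SRorth (W ⊔ W') = SRorth W ⊓ SRorth W' := by
  apply le_antisymm
  · exact le_inf (SRorth_antitone le_sup_left) (SRorth_antitone le_sup_right)
  · rintro v ⟨hv, hv'⟩ w hw
    obtain ⟨a, ha, b, hb, rfl⟩ := Submodule.mem_sup.1 hw
    have : ∑ t, v t * (a + b) t = (∑ t, v t * a t) + ∑ t, v t * b t := by
      simp [mul_add, Finset.sum_add_distrib]
    rw [this, hv a ha, hv' b hb, add_zero]

lemma SRorth_inf (W W' : Submodule k (Fin m → k)) :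
    SRorth (W ⊓ W') = SRorth W ⊔ SRorth W' := by
  have h := SRorth_sup (SRorth W) (SRorth W')
  rw [SRorth_orth, SRorth_orth] at h
  rw [← h, SRorth_orth]

end Perp


section LatLemmas
variable {ℓ : ℕ} {nv : Fin ℓ → ℕ} {K : Fin ℓ → Type} [∀ i, Field (K i)]

lemma SRrk_top : SRrk (⊤ : SRLat ℓ nv K) = ∑ i, nv i := by
  refine Finset.sum_congr rfl fun i _ => ?_
  show finrank (K i) (⊤ : Submodule (K i) (Fin (nv i) → K i)) = nv i
  rw [finrank_top, Module.finrank_fin_fun]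

lemma SRrk_mono {L L' : SRLat ℓ nv K} (h : L ≤ L') : SRrk L ≤ SRrk L' :=
  Finset.sum_le_sum fun i _ => Submodule.finrank_mono (h i)

lemma SRrk_comp_le (L : SRLat ℓ nv K) (i : Fin ℓ) : finrank (K i) (L i) ≤ nv i := by
  have h := Submodule.finrank_le (L i)
  rwa [Module.finrank_fin_fun] at h

lemma SRrk_perp_add (L : SRLat ℓ nv K) : SRrk (SRlatPerp L) + SRrk L = ∑ i, nv i := by
  unfold SRrk SRlatPerp
  rw [← Finset.sum_add_distrib]
  refine Finset.sum_congr rfl fun i _ => ?_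
  rw [SRorth_finrank]
  have := SRrk_comp_le L i
  omega

lemma SRlatPerp_sup (L L' : SRLat ℓ nv K) :
    SRlatPerp (L ⊔ L') = SRlatPerp L ⊓ SRlatPerp L' :=
  funext fun i => SRorth_sup (L i) (L' i)

lemma SRlatPerp_inf (L L' : SRLat ℓ nv K) :
    SRlatPerp (L ⊓ L') = SRlatPerp L ⊔ SRlatPerp L' :=
  funext fun i => SRorth_inf (L i) (L' i)

lemma SRlatPerp_antitone {L L' : SRLat ℓ nv K} (h : L ≤ L') :
    SRlatPerp L' ≤ SRlatPerp L := fun i => SRorth_antitone (h i)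

lemma SRrk_submod (L L' : SRLat ℓ nv K) :
    SRrk (L ⊔ L') + SRrk (L ⊓ L') = SRrk L + SRrk L' := by
  unfold SRrk
  rw [← Finset.sum_add_distrib, ← Finset.sum_add_distrib]
  exact Finset.sum_congr rfl fun i _ =>
    Submodule.finrank_sup_add_finrank_inf_eq (L i) (L' i)

lemma SR_unit_increase (ρ : SRLat ℓ nv K → ℕ) (hρ : IsSumMatroid ρ) :
    ∀ d (L L' : SRLat ℓ nv K), L ≤ L' → SRrk L' - SRrk L ≤ d →
      ρ L' + SRrk L ≤ ρ L + SRrk L' := by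
  intro d
  induction d with
  | zero =>
    intro L L' h hd
    have hm := SRrk_mono h
    have heq : SRrk L = SRrk L' := by omega
    have : L = L' := by
      funext i
      refine Submodule.eq_of_le_of_finrank_eq (h i) ?_
      exact (Finset.sum_eq_sum_iff_of_le
        (fun i _ => Submodule.finrank_mono (h i))).1 heq i (Finset.mem_univ i)
    rw [this]
  | succ d ih =>
    intro L L' h hd
    by_cases hLL : L = L'
    · rw [hLL]
    · have : ∃ i, L i ≠ L' i := by
        by_contra hc
        push_neg at hc
        exact hLL (funext hc)
      obtain ⟨i, hi⟩ := this
      obtain ⟨v, hvL', hvL⟩ := SetLike.exists_of_lt (lt_of_le_of_ne (h i) hi)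
      have hv0 : v ≠ 0 := fun hv => hvL (hv ▸ (L i).zero_mem)
      set X : SRLat ℓ nv K :=
        Function.update (⊥ : SRLat ℓ nv K) i (Submodule.span (K i) {v}) with hX
      have hXi : X i = Submodule.span (K i) {v} := Function.update_self _ _ _
      have hXj : ∀ j, j ≠ i → X j = ⊥ := fun j hj => Function.update_of_ne hj _ _
      have hXrk : SRrk X = 1 := by
        unfold SRrk
        rw [Finset.sum_eq_single i]
        · rw [hXi, finrank_span_singleton hv0]
        · intro j _ hj
          rw [hXj j hj]
          exact finrank_bot _ _
        · intro hni; exact absurd (Finset.mem_univ i) hni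
      have hXL' : X ≤ L' := by
        intro j
        by_cases hj : j = i
        · subst hj
          rw [hXi]
          exact Submodule.span_le.2 (Set.singleton_subset_iff.2 hvL')
        · rw [hXj j hj]; exact bot_le
      have hinf : L ⊓ X = ⊥ := by
        funext j
        by_cases hj : j = i
        · subst hj
          show L j ⊓ X j = ⊥
          rw [hXi, eq_bot_iff]
          rintro x ⟨hx1, hx2⟩
          obtain ⟨c, rfl⟩ := Submodule.mem_span_singleton.1 hx2
          rcases eq_or_ne c 0 with rfl | hc
          · simp
          · refine absurd ?_ hvL
            have hm := (L j).smul_mem c⁻¹ hx1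
            rwa [smul_smul, inv_mul_cancel₀ hc, one_smul] at hm
        · show L j ⊓ X j = ⊥
          rw [hXj j hj, inf_bot_eq]
      have hrkbot : SRrk (⊥ : SRLat ℓ nv K) = 0 := by
        refine Finset.sum_eq_zero fun j _ => ?_
        show finrank (K j) (⊥ : Submodule (K j) (Fin (nv j) → K j)) = 0
        exact finrank_bot _ _
      have hsub := hρ.2.2 L X
      have hXle : ρ X ≤ 1 := le_trans (hρ.1 X) (le_of_eq hXrk)
      have hsuprk : SRrk (L ⊔ X) = SRrk L + 1 := by
        have := SRrk_submod L X
        rw [hinf, hrkbot] at this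
        omega
      have hle : L ⊔ X ≤ L' := sup_le h hXL'
      have hrkle : SRrk (L ⊔ X) ≤ SRrk L' := SRrk_mono hle
      have hih := ih (L ⊔ X) L' hle (by omega)
      have hρle : ρ (L ⊔ X) ≤ ρ L + 1 := by omega
      omega

end LatLemmas

/-- If `ρ` is the rank function of a sum-matroid on `P(K^n)`,
then the dual function `ρ*(L) = ρ(L^⊥) + Rk L − ρ(K^n)` also satisfies the
sum-matroid axioms (R1), (R2), (R3). -/
theorem stmt1_dual_is_sum_matroid
    {ℓ : ℕ} (hℓ : 0 < ℓ) {nv : Fin ℓ → ℕ} (hnv : ∀ i, 0 < nv i)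
    {F : Type} [Field F] [Finite F]
    {K : Fin ℓ → Type} [∀ i, Field (K i)] [∀ i, Finite (K i)]
    [∀ i, Algebra (K i) F] [∀ i, FiniteDimensional (K i) F]
    (ρ : SRLat ℓ nv K → ℕ) (hρ : IsSumMatroid ρ) :
    IsSumMatroid (SRdualRk ρ) := by
  obtain ⟨hR1, hR2, hR3⟩ := hρ
  have hui := SR_unit_increase ρ ⟨hR1, hR2, hR3⟩
  have h1 : ∀ M : SRLat ℓ nv K, ρ ⊤ ≤ ρ (SRlatPerp M) + SRrk M := by
    intro M
    have h := hui (SRrk (⊤ : SRLat ℓ nv K)) (SRlatPerp M) ⊤ le_top (Nat.sub_le _ _)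
    have hpa := SRrk_perp_add M
    have ht := SRrk_top (ℓ := ℓ) (nv := nv) (K := K)
    omega
  refine ⟨?_, ?_, ?_⟩
  · intro L
    have := hR2 (SRlatPerp L) ⊤ le_top
    unfold SRdualRk
    omega
  · intro L L' h
    have hmono := hui (SRrk (SRlatPerp L)) (SRlatPerp L') (SRlatPerp L)
      (SRlatPerp_antitone h) (Nat.sub_le _ _)
    have hpa := SRrk_perp_add L
    have hpa' := SRrk_perp_add L'
    have h1L := h1 L
    have h1L' := h1 L'
    unfold SRdualRk
    omega
  · intro L L'
    have hsub := hR3 (SRlatPerp L) (SRlatPerp L')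
    have hrk := SRrk_submod L L'
    have h1s := h1 (L ⊔ L')
    have h1i := h1 (L ⊓ L')
    have h1L := h1 L
    have h1L' := h1 L'
    unfold SRdualRk
    rw [SRlatPerp_sup, SRlatPerp_inf]
    rw [SRlatPerp_sup] at h1s
    rw [SRlatPerp_inf] at h1i
    omega
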